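/- For every integer n ≥ 15, the quadrics P_J, as J ranges over the 4-element subsets of {5,…,n}, do not form a regular sequence in the polynomial ring ℂ[ψ_{A,B}] in the 6·C(n−4,2) level-2 variables (in any ordering of the family). Consequently, the coupled cluster doubles truncation variety is not a complete intersection for n ≥ 15. -/

import Mathlib

open MvPolynomial

/-- Index type for the level-2 variables `ψ_{A,B}`: `A` is a 2-element subset of
`{1,2,3,4}` (encoded as `Fin 4`) and `B` a 2-element subset of `{5,…,n}` (encoded as `Fin (n-4)`). -/
abbrev Idx2 (m : ℕ) : Type :=
  {A : Finset (Fin 4) // A.card = 2} × {B : Finset (Fin m) // B.card = 2}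

/-- Index type for the level-4 variables `ψ_J`: `J` a 4-element subset of `{5,…,n}`. -/
abbrev Idx4 (m : ℕ) : Type := {J : Finset (Fin m) // J.card = 4}

/-- The level-2 variable `ψ_{A,B}` (junk value `0` if the cardinality constraints fail). -/
noncomputable def psi {m : ℕ} (A : Finset (Fin 4)) (B : Finset (Fin m)) :
    MvPolynomial (Idx2 m) ℂ :=
  if h : A.card = 2 ∧ B.card = 2 then X (⟨A, h.1⟩, ⟨B, h.2⟩) else 0

/-- The sign of the permutation of `J` listing the elements of `I` in increasing order
followed by those of `J \ I` in increasing order (computed via cross inversions). -/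
def shuffleSign {m : ℕ} (J I : Finset (Fin m)) : ℤ :=
  (-1) ^ ((I ×ˢ (J \ I)).filter fun p => p.2 < p.1).card

/-- The quadric `P_J`, for `J` a 4-element subset of `{5,…,n}` (encoded in `Fin (n-4)`);
the 2-element subsets `{1,2},{3,4},{1,3},{2,4},{1,4},{2,3}` of `{1,2,3,4}` are encoded as
`{0,1},{2,3},{0,2},{1,3},{0,3},{1,2} : Finset (Fin 4)`. -/
noncomputable def Pq {m : ℕ} (J : Finset (Fin m)) : MvPolynomial (Idx2 m) ℂ :=
  ∑ I ∈ J.powersetCard 2,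
    (shuffleSign J I : MvPolynomial (Idx2 m) ℂ) *
      (psi {0,1} I * psi {2,3} (J \ I)
        - psi {0,2} I * psi {1,3} (J \ I)
        + psi {0,3} I * psi {1,2} (J \ I))

/-- Index type of the ambient ring: the level-0 variable `ψ₀`, the level-2 variables and the
level-4 variables.  -/
abbrev IdxF (m : ℕ) : Type := Unit ⊕ Idx2 m ⊕ Idx4 m

/-- The homogenized quadric `Q_J = -ψ₀·ψ_J + P_J`. -/
noncomputable def Qq {m : ℕ} (J : Idx4 m) : MvPolynomial (IdxF m) ℂ :=
  - X (Sum.inl ()) * X (Sum.inr (Sum.inr J))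
    + rename (fun i => Sum.inr (Sum.inl i)) (Pq J.val)

open MvPolynomial Module

namespace CCD

lemma degree_eq_sum_id {σ : Type*} (f : σ →₀ ℕ) : f.degree = f.sum fun _ => id := rfl

noncomputable def homogEquivSym (σ : Type*) [DecidableEq σ] (d : ℕ) :
    Sym σ d ≃ ↥{μ : σ →₀ ℕ | μ.degree = d} :=
  (Sym.equivNatSum σ d).trans (Equiv.subtypeEquivRight fun μ => by
    simp only [Set.mem_setOf_eq, degree_eq_sum_id])

set_option maxHeartbeats 1000000 in
lemma finrank_homogeneousSubmodule (σ : Type*) [Fintype σ] [DecidableEq σ] (d : ℕ) :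
    Module.finrank ℂ (homogeneousSubmodule σ ℂ d) = (Fintype.card σ + d - 1).choose d := by
  rw [homogeneousSubmodule_eq_finsupp_supported]
  haveI : Fintype ↥{μ : σ →₀ ℕ | μ.degree = d} :=
    Fintype.ofEquiv (Sym σ d) (homogEquivSym σ d)
  rw [(AddMonoidAlgebra.supportedEquivFinsupp (R := ℂ) (S := ℂ) {μ : σ →₀ ℕ | μ.degree = d}).finrank_eq,
    (Finsupp.linearEquivFunOnFinite ℂ ℂ _).finrank_eq, Module.finrank_pi,
    ← Fintype.card_congr (homogEquivSym σ d), Sym.card_sym_eq_choose]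

set_option maxHeartbeats 1000000 in
instance fdHomog (σ : Type*) [Finite σ] (d : ℕ) :
    FiniteDimensional ℂ (homogeneousSubmodule σ ℂ d) := by
  cases nonempty_fintype σ
  classical
  rw [homogeneousSubmodule_eq_finsupp_supported]
  haveI : Finite ↥{μ : σ →₀ ℕ | μ.degree = d} :=
    Finite.of_equiv _ (homogEquivSym σ d)
  exact Module.Finite.equiv (AddMonoidAlgebra.supportedEquivFinsupp (R := ℂ) (S := ℂ) _).symm

lemma compA {σ : Type*} {f : MvPolynomial σ ℂ} {k : ℕ} (hf : f.IsHomogeneous k)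
    (b : MvPolynomial σ ℂ) (d : ℕ) :
    homogeneousComponent (d + k) (b * f) = homogeneousComponent d b * f := by
  conv_lhs => rw [← sum_homogeneousComponent b, Finset.sum_mul, map_sum]
  have h : ∀ e, homogeneousComponent (d + k) (homogeneousComponent e b * f)
      = if d = e then homogeneousComponent e b * f else 0 := by
    intro e
    rw [homogeneousComponent_of_mem ((homogeneousComponent_isHomogeneous e b).mul hf)]
    simp [Nat.add_right_cancel_iff]
  simp only [h]
  rw [Finset.sum_ite_eq (Finset.range (b.totalDegree + 1)) d
    (fun e => homogeneousComponent e b * f)]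
  split_ifs with hd
  · rfl
  · rw [homogeneousComponent_eq_zero, zero_mul]
    simp only [Finset.mem_range, not_lt] at hd; omega

lemma compA0 {σ : Type*} {f : MvPolynomial σ ℂ} {k : ℕ} (hf : f.IsHomogeneous k)
    (b : MvPolynomial σ ℂ) {d : ℕ} (hd : d < k) :
    homogeneousComponent d (b * f) = 0 := by
  conv_lhs => rw [← sum_homogeneousComponent b, Finset.sum_mul, map_sum]
  apply Finset.sum_eq_zero
  intro e _
  rw [homogeneousComponent_of_mem ((homogeneousComponent_isHomogeneous e b).mul hf)]
  rw [if_neg (by omega)]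

attribute [local instance] MvPolynomial.gradedAlgebra

lemma span_comp_mem {σ : Type*} (S : Set (MvPolynomial σ ℂ))
    (hS : ∀ g ∈ S, ∃ k, g.IsHomogeneous k) (d : ℕ) {a : MvPolynomial σ ℂ}
    (ha : a ∈ Ideal.span S) : homogeneousComponent d a ∈ Ideal.span S := by
  classical
  have h := Ideal.homogeneous_span (homogeneousSubmodule σ ℂ) S
    (fun x hx => (hS x hx).imp fun k hk => (mem_homogeneousSubmodule k x).2 hk)
  have := h d ha
  rwa [show ((DirectSum.decompose (homogeneousSubmodule σ ℂ) a d :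
      homogeneousSubmodule σ ℂ d) : MvPolynomial σ ℂ)
      = homogeneousComponent d a from decomposition.decompose'_apply a d] at this

noncomputable section

variable {σ : Type*} [Fintype σ] [DecidableEq σ]

/-- degree-d piece of an ideal, as a ℂ-submodule. -/
def degSub (I : Ideal (MvPolynomial σ ℂ)) (d : ℕ) : Submodule ℂ (MvPolynomial σ ℂ) :=
  (Submodule.restrictScalars ℂ I) ⊓ homogeneousSubmodule σ ℂ d

instance (I : Ideal (MvPolynomial σ ℂ)) (d : ℕ) : FiniteDimensional ℂ (degSub I d) :=
  Submodule.finiteDimensional_of_le (inf_le_right (a := Submodule.restrictScalars ℂ I))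

abbrev mulF (f : MvPolynomial σ ℂ) : MvPolynomial σ ℂ →ₗ[ℂ] MvPolynomial σ ℂ :=
  LinearMap.mulRight ℂ f

lemma map_mulF_le {f : MvPolynomial σ ℂ} (hf : f.IsHomogeneous 2) (d : ℕ) :
    Submodule.map (mulF f) (homogeneousSubmodule σ ℂ d) ≤ homogeneousSubmodule σ ℂ (d + 2) := by
  rintro x ⟨b, hb, rfl⟩
  exact (mem_homogeneousSubmodule _ _).2 (((mem_homogeneousSubmodule _ _).1 hb).mul hf)

instance fdMap (f : MvPolynomial σ ℂ) (d : ℕ) :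
    FiniteDimensional ℂ (Submodule.map (mulF f) (homogeneousSubmodule σ ℂ d)) :=
  Module.Finite.map _ _

set_option maxHeartbeats 1000000 in
lemma degSub_sup {I : Ideal (MvPolynomial σ ℂ)} {f : MvPolynomial σ ℂ}
    (hI : ∀ d, ∀ a ∈ I, homogeneousComponent d a ∈ I) (hf : f.IsHomogeneous 2) (d : ℕ) :
    degSub (I ⊔ Ideal.span {f}) (d + 2)
      = degSub I (d + 2) ⊔ Submodule.map (mulF f) (homogeneousSubmodule σ ℂ d) := by
  apply le_antisymm
  · rintro g ⟨hgJ, hgd⟩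
    obtain ⟨a, haI, b, hb, rfl⟩ := Submodule.mem_sup.1 hgJ
    obtain ⟨c, rfl⟩ := Ideal.mem_span_singleton'.1 hb
    have : a + c * f = homogeneousComponent (d + 2) a + homogeneousComponent d c * f := by
      conv_lhs => rw [← homogeneousComponent_of_mem hgd |>.trans (if_pos rfl)]
      rw [map_add, compA hf]
    rw [this]
    apply Submodule.add_mem_sup
    · exact ⟨hI (d + 2) a haI, homogeneousComponent_mem _ _⟩
    · exact ⟨homogeneousComponent d c, homogeneousComponent_mem _ _, rfl⟩
  · apply sup_le
    · exact fun x hx => ⟨Ideal.mem_sup_left hx.1, hx.2⟩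
    · rintro x ⟨b, hb, rfl⟩
      refine ⟨?_, map_mulF_le hf d ⟨b, hb, rfl⟩⟩
      have h1 : f ∈ I ⊔ Ideal.span {f} :=
        Ideal.mem_sup_right (Ideal.subset_span (Set.mem_singleton f))
      have h2 : b * f ∈ I ⊔ Ideal.span {f} := Ideal.mul_mem_left _ b h1
      exact h2

set_option maxHeartbeats 1000000 in
lemma degSub_low {I : Ideal (MvPolynomial σ ℂ)} {f : MvPolynomial σ ℂ}
    (hI : ∀ d, ∀ a ∈ I, homogeneousComponent d a ∈ I) (hf : f.IsHomogeneous 2)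
    {d : ℕ} (hd : d < 2) :
    degSub (I ⊔ Ideal.span {f}) d = degSub I d := by
  apply le_antisymm
  · rintro g ⟨hgJ, hgd⟩
    obtain ⟨a, haI, b, hb, rfl⟩ := Submodule.mem_sup.1 hgJ
    obtain ⟨c, rfl⟩ := Ideal.mem_span_singleton'.1 hb
    have : a + c * f = homogeneousComponent d a := by
      conv_lhs => rw [← homogeneousComponent_of_mem hgd |>.trans (if_pos rfl)]
      rw [map_add, compA0 hf c hd, add_zero]
    rw [this]
    exact ⟨hI d a haI, homogeneousComponent_mem _ _⟩
  · exact fun x hx => ⟨Ideal.mem_sup_left hx.1, hx.2⟩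

lemma degSub_inf {I : Ideal (MvPolynomial σ ℂ)} {f : MvPolynomial σ ℂ}
    (hreg : ∀ g, g * f ∈ I → g ∈ I) (hf : f.IsHomogeneous 2) (d : ℕ) :
    degSub I (d + 2) ⊓ Submodule.map (mulF f) (homogeneousSubmodule σ ℂ d)
      = Submodule.map (mulF f) (degSub I d) := by
  apply le_antisymm
  · rintro x ⟨⟨hxI, -⟩, b, hb, rfl⟩
    exact ⟨b, ⟨hreg b hxI, hb⟩, rfl⟩
  · rintro x ⟨b, ⟨hbI, hbd⟩, rfl⟩
    exact ⟨⟨Ideal.mul_mem_right f I hbI, map_mulF_le hf d ⟨b, hbd, rfl⟩⟩, b, hbd, rfl⟩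

/-- The Hilbert function of `R/I` in degree `d`, as an integer. -/
def Hfun (I : Ideal (MvPolynomial σ ℂ)) (d : ℕ) : ℤ :=
  (finrank ℂ (homogeneousSubmodule σ ℂ d) : ℤ) - finrank ℂ (degSub I d)

lemma finrank_map_mulF {f : MvPolynomial σ ℂ} (hf : f ≠ 0)
    (W : Submodule ℂ (MvPolynomial σ ℂ)) :
    finrank ℂ (Submodule.map (mulF f) W) = finrank ℂ W := by
  have hinj : Function.Injective (mulF f) := fun a b hab => by
    have : a * f = b * f := hab
    exact mul_left_injective₀ hf this
  exact (LinearEquiv.finrank_eq (Submodule.equivMapOfInjective (mulF f) hinj W)).symm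

lemma Hfun_step {I : Ideal (MvPolynomial σ ℂ)} {f : MvPolynomial σ ℂ}
    (hI : ∀ d, ∀ a ∈ I, homogeneousComponent d a ∈ I) (hf : f.IsHomogeneous 2)
    (hfne : f ≠ 0) (hreg : ∀ g, g * f ∈ I → g ∈ I) (d : ℕ) :
    Hfun (I ⊔ Ideal.span {f}) (d + 2) = Hfun I (d + 2) - Hfun I d := by
  have h1 := Submodule.finrank_sup_add_finrank_inf_eq (degSub I (d + 2))
    (Submodule.map (mulF f) (homogeneousSubmodule σ ℂ d))
  rw [degSub_inf hreg hf d, finrank_map_mulF hfne, finrank_map_mulF hfne] at h1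
  unfold Hfun
  rw [degSub_sup hI hf d]
  omega

lemma Hfun_step_low {I : Ideal (MvPolynomial σ ℂ)} {f : MvPolynomial σ ℂ}
    (hI : ∀ d, ∀ a ∈ I, homogeneousComponent d a ∈ I) (hf : f.IsHomogeneous 2)
    {d : ℕ} (hd : d < 2) :
    Hfun (I ⊔ Ideal.span {f}) d = Hfun I d := by
  unfold Hfun; rw [degSub_low hI hf hd]

end

namespace Main
open PowerSeries

variable {σ : Type*} [Fintype σ] [DecidableEq σ]

noncomputable def Hser (I : Ideal (MvPolynomial σ ℂ)) : PowerSeries ℤ :=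
  PowerSeries.mk fun d => Hfun I d

lemma smul_top_eq {R : Type*} [CommRing R] (I : Ideal R) :
    (I • (⊤ : Submodule R R) : Submodule R R) = I := by
  apply le_antisymm
  · exact Submodule.smul_le.2 fun r hr n _ => by
      simpa [smul_eq_mul] using I.mul_mem_right n hr
  · intro x hx
    simpa [smul_eq_mul] using Submodule.smul_mem_smul hx (Submodule.mem_top (x := (1 : R)))

lemma Hser_step {I : Ideal (MvPolynomial σ ℂ)} {f : MvPolynomial σ ℂ}
    (hI : ∀ d, ∀ a ∈ I, homogeneousComponent d a ∈ I) (hf : f.IsHomogeneous 2)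
    (hfne : f ≠ 0) (hreg : ∀ g, g * f ∈ I → g ∈ I) :
    Hser (I ⊔ Ideal.span {f}) = (1 - PowerSeries.X ^ 2) * Hser I := by
  ext d
  rw [sub_mul, one_mul, map_sub, coeff_X_pow_mul']
  rcases lt_or_ge d 2 with hd | hd
  · rw [if_neg (by omega)]
    simpa [Hser] using Hfun_step_low hI hf hd
  · obtain ⟨e, rfl⟩ : ∃ e, d = e + 2 := ⟨d - 2, by omega⟩
    rw [if_pos (by omega)]
    simpa [Hser] using Hfun_step hI hf hfne hreg e

lemma Hser_bot (h : 0 < Fintype.card σ) :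
    ((1 - PowerSeries.X) ^ (Fintype.card σ) : PowerSeries ℤ) * Hser (⊥ : Ideal (MvPolynomial σ ℂ)) = 1 := by
  have hb : Hser (⊥ : Ideal (MvPolynomial σ ℂ)) = (invOneSubPow ℤ (Fintype.card σ)).val := by
    obtain ⟨t, ht⟩ : ∃ t, Fintype.card σ = t + 1 := ⟨Fintype.card σ - 1, by omega⟩
    rw [ht, invOneSubPow_val_succ_eq_mk_add_choose]
    ext d
    have hdeg : degSub (⊥ : Ideal (MvPolynomial σ ℂ)) d = ⊥ := by
      simp [degSub]
    have h0 : finrank ℂ (degSub (⊥ : Ideal (MvPolynomial σ ℂ)) d) = 0 := by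
      rw [hdeg]; exact finrank_bot ℂ _
    have h1 : (t + d).choose t = (t + d).choose d := by
      have h2 := Nat.choose_symm (Nat.le_add_left d t)
      simpa using h2
    simp only [Hser, coeff_mk, Hfun, h0, Nat.cast_zero, sub_zero,
      finrank_homogeneousSubmodule, ht, h1]
    norm_cast
    rw [show t + 1 + d - 1 = t + d by omega]
  rw [hb, ← invOneSubPow_inv_eq_one_sub_pow]
  exact (invOneSubPow ℤ (Fintype.card σ)).inv_val


set_option maxHeartbeats 2000000 in
theorem not_isRegular (fs : List (MvPolynomial σ ℂ))
    (hhom : ∀ f ∈ fs, f.IsHomogeneous 2)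
    (pt : σ → ℂ) (hev : ∀ f ∈ fs, aeval pt f = 0)
    (v₀ : σ) (hv₀ : pt v₀ = 1)
    (hcard : Fintype.card σ ≤ fs.length) (hσ : 0 < Fintype.card σ) :
    ¬ RingTheory.Sequence.IsRegular (MvPolynomial σ ℂ) fs := by
  intro hreg
  set s := fs.length with hs
  let Ii : ℕ → Ideal (MvPolynomial σ ℂ) := fun i => Ideal.ofList (fs.take i)
  have hker : ∀ i, ∀ a ∈ Ii i, (aeval pt) a = 0 := by
    intro i a ha
    have hle : Ii i ≤ RingHom.ker ((aeval pt : MvPolynomial σ ℂ →ₐ[ℂ] ℂ) : MvPolynomial σ ℂ →+* ℂ) := by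
      apply Ideal.span_le.2
      intro x hx
      have hx' : x ∈ fs := List.mem_of_mem_take hx
      exact hev x hx'
    exact hle ha
  have hproper : ∀ i, (1 : MvPolynomial σ ℂ) ∉ Ii i := by
    intro i h1
    have := hker i 1 h1
    simp at this
  have hIi : ∀ i, ∀ d, ∀ a ∈ Ii i, homogeneousComponent d a ∈ Ii i := by
    intro i d a ha
    exact span_comp_mem _ (fun g hg => ⟨2, hhom g (List.mem_of_mem_take hg)⟩) d ha
  have hw := hreg.toIsWeaklyRegular
  have hstepreg : ∀ i (h : i < s), ∀ g, g * fs[i] ∈ Ii i → g ∈ Ii i := by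
    intro i h g hg
    have hr := hw.regular_mod_prev i h
    have h0 : fs[i] • (Submodule.Quotient.mk g :
        MvPolynomial σ ℂ ⧸ (Ideal.ofList (fs.take i) • ⊤ :
          Submodule (MvPolynomial σ ℂ) (MvPolynomial σ ℂ))) = fs[i] • (0 : _) := by
      rw [smul_zero, ← Submodule.Quotient.mk_smul, Submodule.Quotient.mk_eq_zero, smul_top_eq]
      show fs[i] * g ∈ Ideal.ofList (fs.take i)
      rwa [mul_comm]
    have := hr h0
    rw [Submodule.Quotient.mk_eq_zero, smul_top_eq] at this
    exact this
  have hne : ∀ i (h : i < s), fs[i] ≠ 0 := by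
    intro i h h0
    apply hproper i
    apply hstepreg i h 1
    rw [h0, mul_zero]
    exact (Ii i).zero_mem
  have hser : ∀ i, i ≤ s → Hser (Ii i)
      = (1 - PowerSeries.X ^ 2) ^ i * Hser (⊥ : Ideal (MvPolynomial σ ℂ)) := by
    intro i
    induction i with
    | zero => intro _; simp [Ii]
    | succ i ih =>
      intro hi
      have hi' : i < s := by omega
      have htake : fs.take (i + 1) = fs.take i ++ [fs[i]] := by
        rw [List.take_succ, List.getElem?_eq_getElem hi']
        rfl
      have hIstep : Ii (i + 1) = Ii i ⊔ Ideal.span {fs[i]} := by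
        show Ideal.ofList (fs.take (i+1)) = _
        rw [htake, Ideal.ofList_append, Ideal.ofList_singleton]
      rw [hIstep, Hser_step (hIi i) (hhom _ (List.getElem_mem hi')) (hne i hi') (hstepreg i hi'),
        ih (le_of_lt hi'), pow_succ]
      ring
  have hfin := hser s le_rfl
  have key : Hser (Ii s) = (1 + PowerSeries.X) ^ s
      * (1 - PowerSeries.X) ^ (s - Fintype.card σ) := by
    have h2 : ((1 - PowerSeries.X ^ 2 : PowerSeries ℤ)) ^ s
        = (1 + PowerSeries.X) ^ s * (1 - PowerSeries.X) ^ (s - Fintype.card σ)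
          * (1 - PowerSeries.X) ^ (Fintype.card σ) := by
      rw [mul_assoc, ← pow_add, Nat.sub_add_cancel hcard, ← mul_pow]
      ring_nf
    rw [hfin, h2, mul_assoc, Hser_bot hσ, mul_one]
  have hcoeff : Hfun (Ii s) (2 * s + 1) = 0 := by
    have hco : PowerSeries.coeff (2 * s + 1) (Hser (Ii s)) = Hfun (Ii s) (2 * s + 1) :=
      PowerSeries.coeff_mk _ _
    rw [key] at hco
    have hpoly : ((1 + PowerSeries.X) ^ s * (1 - PowerSeries.X) ^ (s - Fintype.card σ)
          : PowerSeries ℤ)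
        = (((1 + Polynomial.X) ^ s * (1 - Polynomial.X) ^ (s - Fintype.card σ)
          : Polynomial ℤ) : PowerSeries ℤ) := by
      simp [Polynomial.coe_mul, Polynomial.coe_pow, Polynomial.coe_add, Polynomial.coe_sub,
        Polynomial.coe_one, Polynomial.coe_X]
    rw [hpoly, Polynomial.coeff_coe] at hco
    rw [← hco]
    apply Polynomial.coeff_eq_zero_of_natDegree_lt
    have hd1 : (1 + Polynomial.X : Polynomial ℤ).natDegree ≤ 1 :=
      le_trans (Polynomial.natDegree_add_le _ _) (by simp)
    have hd2 : (1 - Polynomial.X : Polynomial ℤ).natDegree ≤ 1 :=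
      le_trans (Polynomial.natDegree_sub_le _ _) (by simp)
    have hmul := Polynomial.natDegree_mul_le
      (p := ((1 + Polynomial.X) ^ s : Polynomial ℤ))
      (q := ((1 - Polynomial.X) ^ (s - Fintype.card σ) : Polynomial ℤ))
    have hp1 : ((1 + Polynomial.X : Polynomial ℤ) ^ s).natDegree ≤ s :=
      le_trans (Polynomial.natDegree_pow_le) (by nlinarith)
    have hp2 : ((1 - Polynomial.X : Polynomial ℤ) ^ (s - Fintype.card σ)).natDegree
        ≤ s - Fintype.card σ :=
      le_trans (Polynomial.natDegree_pow_le) (by nlinarith)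
    omega
  have hdim : degSub (Ii s) (2 * s + 1) = homogeneousSubmodule σ ℂ (2 * s + 1) := by
    apply Submodule.eq_of_le_of_finrank_eq
      (inf_le_right : degSub (Ii s) (2 * s + 1) ≤ homogeneousSubmodule σ ℂ (2 * s + 1))
    unfold Hfun degSub at hcoeff
    omega
  have hX : (MvPolynomial.X v₀ : MvPolynomial σ ℂ) ^ (2 * s + 1) ∈ degSub (Ii s) (2 * s + 1) := by
    rw [hdim]
    exact (mem_homogeneousSubmodule _ _).2 (isHomogeneous_X_pow v₀ (2 * s + 1))
  have hzero : aeval pt ((MvPolynomial.X v₀ : MvPolynomial σ ℂ) ^ (2 * s + 1)) = 0 :=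
    hker s _ hX.1
  rw [map_pow, aeval_X, hv₀, one_pow] at hzero
  exact one_ne_zero hzero

end Main
end CCD

namespace App

lemma psi_hom {m : ℕ} (A : Finset (Fin 4)) (B : Finset (Fin m)) :
    (psi A B).IsHomogeneous 1 := by
  rw [psi]
  split_ifs with h
  · exact isHomogeneous_X _ _
  · exact isHomogeneous_zero _ _ _

lemma Pq_hom {m : ℕ} (J : Finset (Fin m)) : (Pq J).IsHomogeneous 2 := by
  apply MvPolynomial.IsHomogeneous.sum
  intro I _
  have hc : (((shuffleSign J I : ℤ) : MvPolynomial (Idx2 m) ℂ)).IsHomogeneous 0 := by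
    rw [← map_intCast (C : ℂ →+* MvPolynomial (Idx2 m) ℂ)]
    exact isHomogeneous_C _ _
  have h2 : ∀ (A : Finset (Fin 4)) B (A' : Finset (Fin 4)) B',
      ((psi (m := m) A B) * psi A' B').IsHomogeneous 2 :=
    fun A B A' B' => (psi_hom A B).mul (psi_hom A' B')
  exact hc.mul (((h2 _ _ _ _).sub (h2 _ _ _ _)).add (h2 _ _ _ _))

def pt (m : ℕ) : Idx2 m → ℂ := fun v => if v.1.1 = ({0,1} : Finset (Fin 4)) then 1 else 0

lemma psi_eval {m : ℕ} {A : Finset (Fin 4)} (hA : A ≠ ({0,1} : Finset (Fin 4)))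
    (B : Finset (Fin m)) : aeval (pt m) (psi A B) = 0 := by
  rw [psi]
  split_ifs with h
  · rw [aeval_X]
    simp [pt, hA]
  · exact map_zero _

lemma Pq_eval {m : ℕ} (J : Finset (Fin m)) : aeval (pt m) (Pq J) = 0 := by
  rw [Pq, map_sum]
  apply Finset.sum_eq_zero
  intro I _
  simp only [map_mul, map_add, map_sub,
    psi_eval (show ({2,3} : Finset (Fin 4)) ≠ {0,1} by decide),
    psi_eval (show ({0,2} : Finset (Fin 4)) ≠ {0,1} by decide),
    psi_eval (show ({0,3} : Finset (Fin 4)) ≠ {0,1} by decide)]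
  ring

lemma choose_ineq (k : ℕ) : 6 * (k + 11).choose 2 ≤ (k + 11).choose 4 := by
  have h2 := Nat.choose_mul_factorial_mul_factorial (show 2 ≤ k + 11 by omega)
  have h4 := Nat.choose_mul_factorial_mul_factorial (show 4 ≤ k + 11 by omega)
  rw [show k + 11 - 2 = k + 9 by omega] at h2
  rw [show k + 11 - 4 = k + 7 by omega] at h4
  have h9 : (k + 9).factorial = (k + 9) * ((k + 8) * (k + 7).factorial) := by
    rw [show k + 9 = (k + 8) + 1 by omega, Nat.factorial_succ,
      show k + 8 = (k + 7) + 1 by omega, Nat.factorial_succ]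
  rw [show Nat.factorial 2 = 2 from rfl, h9] at h2
  rw [show Nat.factorial 4 = 24 from rfl] at h4
  have hE : (k + 11).choose 2 * 2 * ((k + 9) * ((k + 8) * (k + 7).factorial))
      = (k + 11).choose 4 * 24 * (k + 7).factorial := h2.trans h4.symm
  have hF : 0 < (k + 7).factorial := Nat.factorial_pos _
  have hE' : (k + 11).choose 2 * (2 * (k + 9) * (k + 8)) = (k + 11).choose 4 * 24 := by
    apply Nat.eq_of_mul_eq_mul_right hF
    calc (k + 11).choose 2 * (2 * (k + 9) * (k + 8)) * (k + 7).factorial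
        = (k + 11).choose 2 * 2 * ((k + 9) * ((k + 8) * (k + 7).factorial)) := by ring
      _ = (k + 11).choose 4 * 24 * (k + 7).factorial := hE
  nlinarith [Nat.zero_le ((k + 11).choose 2), Nat.zero_le k,
    hE', sq_nonneg k]

end App

namespace App

theorem main {m : ℕ} (hm : 11 ≤ m) (l : List (Idx4 m)) (hnd : l.Nodup)
    (hall : ∀ J : Idx4 m, J ∈ l) :
    ¬ RingTheory.Sequence.IsRegular (MvPolynomial (Idx2 m) ℂ)
      (l.map fun J => Pq J.val) := by
  classical
  have hlen : (l.map fun J => Pq J.val).length = Nat.choose m 4 := by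
    rw [List.length_map, ← List.toFinset_card_of_nodup hnd,
      Finset.eq_univ_iff_forall.2 fun J => List.mem_toFinset.2 (hall J), Finset.card_univ]
    rw [show Fintype.card (Idx4 m) = (Fintype.card (Fin m)).choose 4 from
      Fintype.card_finset_len 4, Fintype.card_fin]
  have hcard2 : Fintype.card (Idx2 m) = 6 * Nat.choose m 2 := by
    rw [Fintype.card_prod,
      show Fintype.card {A : Finset (Fin 4) // A.card = 2}
        = (Fintype.card (Fin 4)).choose 2 from Fintype.card_finset_len 2,
      show Fintype.card {B : Finset (Fin m) // B.card = 2}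
        = (Fintype.card (Fin m)).choose 2 from Fintype.card_finset_len 2,
      Fintype.card_fin, Fintype.card_fin, show Nat.choose 4 2 = 6 from rfl]
  have hineq : 6 * Nat.choose m 2 ≤ Nat.choose m 4 := by
    obtain ⟨k, rfl⟩ : ∃ k, m = k + 11 := ⟨m - 11, by omega⟩
    exact choose_ineq k
  have h2m : ({⟨0, by omega⟩, ⟨1, by omega⟩} : Finset (Fin m)).card = 2 :=
    Finset.card_pair (by simp)
  apply CCD.Main.not_isRegular (l.map fun J => Pq J.val)
    (fun f hf => by
      obtain ⟨J, -, rfl⟩ := List.mem_map.1 hf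
      exact Pq_hom J.val)
    (pt m)
    (fun f hf => by
      obtain ⟨J, -, rfl⟩ := List.mem_map.1 hf
      exact Pq_eval J.val)
    (⟨⟨({0,1} : Finset (Fin 4)), by decide⟩, ⟨_, h2m⟩⟩)
    (by simp [pt])
    (by rw [hlen, hcard2]; exact hineq)
    (by rw [hcard2]; exact Nat.mul_pos (by norm_num) (Nat.choose_pos (by omega)))

end App

/-- For `n ≥ 15`, the quadrics `P_J` do not form a regular sequence in
`ℂ[ψ_{A,B}]`, in any ordering of the family. -/
theorem PJ_not_regular_sequence_of_ge_fifteen (n : ℕ) (hn : 15 ≤ n)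
    (l : List (Idx4 (n - 4))) (hnd : l.Nodup) (hall : ∀ J : Idx4 (n - 4), J ∈ l) :
    ¬ RingTheory.Sequence.IsRegular (MvPolynomial (Idx2 (n - 4)) ℂ)
        (l.map fun J => Pq J.val) :=
  App.main (by omega) l hnd hall
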